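/- For hyperbolic functions F, G on Ω with Im(conj(F)G) nowhere vanishing, a C¹ hyperbolic function w = φF + ψG (φ, ψ real-valued) satisfies φ_z̄ F + ψ_z̄ G = 0 if and only if w satisfies the hyperbolic Vekua equation w_z̄ = a_{(F,G)} w + b_{(F,G)} conj(w), where a_{(F,G)} = −(conj(F)G_z̄ − F_z̄ conj(G))/(F conj(G) − conj(F) G) and b_{(F,G)} = (F G_z̄ − F_z̄ G)/(F conj(G) − conj(F) G). -/

import Mathlib

set_option maxHeartbeats 1000000


/-- Hyperbolic (split-complex / duplex) numbers `x + j t`, with `j ^ 2 = 1`. -/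
structure Hyp where
  re : ℝ
  im : ℝ

namespace Hyp

instance : Zero Hyp := ⟨⟨0, 0⟩⟩
instance : One Hyp := ⟨⟨1, 0⟩⟩
instance : Add Hyp := ⟨fun z w => ⟨z.re + w.re, z.im + w.im⟩⟩
instance : Neg Hyp := ⟨fun z => ⟨-z.re, -z.im⟩⟩
instance : Sub Hyp := ⟨fun z w => ⟨z.re - w.re, z.im - w.im⟩⟩
/-- multiplication determined by `j ^ 2 = 1` -/
instance : Mul Hyp := ⟨fun z w => ⟨z.re * w.re + z.im * w.im, z.re * w.im + z.im * w.re⟩⟩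
instance : SMul ℝ Hyp := ⟨fun r z => ⟨r * z.re, r * z.im⟩⟩

/-- the hyperbolic imaginary unit `j` -/
def j : Hyp := ⟨0, 1⟩

/-- hyperbolic conjugation `conj (x + j t) = x - j t` -/
def conj (z : Hyp) : Hyp := ⟨z.re, -z.im⟩

/-- the (total) inverse; for non-invertible elements it returns junk -/
noncomputable instance : Inv Hyp := ⟨fun z => ⟨z.re / (z.re ^ 2 - z.im ^ 2), -z.im / (z.re ^ 2 - z.im ^ 2)⟩⟩
noncomputable instance : Div Hyp := ⟨fun z w => z * w⁻¹⟩

end Hyp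

/-- partial derivative in the `x`-direction -/
noncomputable def px (f : ℝ × ℝ → ℝ) (p : ℝ × ℝ) : ℝ := fderiv ℝ f p (1, 0)

/-- partial derivative in the `t`-direction -/
noncomputable def pt (f : ℝ × ℝ → ℝ) (p : ℝ × ℝ) : ℝ := fderiv ℝ f p (0, 1)

/-- real part of a hyperbolic-valued function -/
def reP (f : ℝ × ℝ → Hyp) : ℝ × ℝ → ℝ := fun q => (f q).re
/-- imaginary (`j`) part of a hyperbolic-valued function -/
def imP (f : ℝ × ℝ → Hyp) : ℝ × ℝ → ℝ := fun q => (f q).im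

/-- `∂_z̄ = (1/2)(∂_x - j ∂_t)` acting on `f = u + j v`:
`(1/2)((u_x - v_t) + j (v_x - u_t))`. -/
noncomputable def dzbar (f : ℝ × ℝ → Hyp) (p : ℝ × ℝ) : Hyp :=
  ⟨(px (reP f) p - pt (imP f) p) / 2, (px (imP f) p - pt (reP f) p) / 2⟩

/-- `∂_z = (1/2)(∂_x + j ∂_t)` acting on `f = u + j v`:
`(1/2)((u_x + v_t) + j (v_x + u_t))`. -/
noncomputable def dz (f : ℝ × ℝ → Hyp) (p : ℝ × ℝ) : Hyp :=
  ⟨(px (reP f) p + pt (imP f) p) / 2, (px (imP f) p + pt (reP f) p) / 2⟩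

/-- `∂_z̄` of a real-valued function, as a hyperbolic number. -/
noncomputable def dzbarR (φ : ℝ × ℝ → ℝ) (p : ℝ × ℝ) : Hyp :=
  ⟨px φ p / 2, -(pt φ p) / 2⟩

/-- a function is C¹ (componentwise) -/
def HC1 (f : ℝ × ℝ → Hyp) : Prop := ContDiff ℝ 1 (reP f) ∧ ContDiff ℝ 1 (imP f)

/-- characteristic coefficient `a_{(F,G)}` -/
noncomputable def charA (F G : ℝ × ℝ → Hyp) (p : ℝ × ℝ) : Hyp :=
  -((Hyp.conj (F p) * dzbar G p - dzbar F p * Hyp.conj (G p)) /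
    (F p * Hyp.conj (G p) - Hyp.conj (F p) * G p))

/-- characteristic coefficient `b_{(F,G)}` -/
noncomputable def charB (F G : ℝ × ℝ → Hyp) (p : ℝ × ℝ) : Hyp :=
  (F p * dzbar G p - dzbar F p * G p) /
    (F p * Hyp.conj (G p) - Hyp.conj (F p) * G p)



/-- characteristic coefficient `A_{(F,G)}` -/
noncomputable def charCapA (F G : ℝ × ℝ → Hyp) (p : ℝ × ℝ) : Hyp :=
  -((Hyp.conj (F p) * dz G p - dz F p * Hyp.conj (G p)) /
    (F p * Hyp.conj (G p) - Hyp.conj (F p) * G p))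

/-- characteristic coefficient `B_{(F,G)}` -/
noncomputable def charCapB (F G : ℝ × ℝ → Hyp) (p : ℝ × ℝ) : Hyp :=
  (F p * dz G p - dz F p * G p) /
    (F p * Hyp.conj (G p) - Hyp.conj (F p) * G p)

namespace HypAux

open Hyp

theorem hext {z w : Hyp} (h1 : z.re = w.re) (h2 : z.im = w.im) : z = w := by
  cases z; cases w; simp_all

@[simp] lemma add_re (z w : Hyp) : (z + w).re = z.re + w.re := rfl
@[simp] lemma add_im (z w : Hyp) : (z + w).im = z.im + w.im := rfl
@[simp] lemma sub_re (z w : Hyp) : (z - w).re = z.re - w.re := rfl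
@[simp] lemma sub_im (z w : Hyp) : (z - w).im = z.im - w.im := rfl
@[simp] lemma neg_re (z : Hyp) : (-z).re = -z.re := rfl
@[simp] lemma neg_im (z : Hyp) : (-z).im = -z.im := rfl
@[simp] lemma mul_re (z w : Hyp) : (z * w).re = z.re * w.re + z.im * w.im := rfl
@[simp] lemma mul_im (z w : Hyp) : (z * w).im = z.re * w.im + z.im * w.re := rfl
@[simp] lemma smul_re (r : ℝ) (z : Hyp) : (r • z).re = r * z.re := rfl
@[simp] lemma smul_im (r : ℝ) (z : Hyp) : (r • z).im = r * z.im := rfl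
@[simp] lemma conj_re (z : Hyp) : (Hyp.conj z).re = z.re := rfl
@[simp] lemma conj_im (z : Hyp) : (Hyp.conj z).im = -z.im := rfl
@[simp] lemma inv_re (z : Hyp) : (z⁻¹).re = z.re / (z.re ^ 2 - z.im ^ 2) := rfl
@[simp] lemma inv_im (z : Hyp) : (z⁻¹).im = -z.im / (z.re ^ 2 - z.im ^ 2) := rfl
@[simp] lemma zero_re : (0 : Hyp).re = 0 := rfl
@[simp] lemma zero_im : (0 : Hyp).im = 0 := rfl
lemma div_def (z w : Hyp) : z / w = z * w⁻¹ := rfl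

lemma cancel (X Y : Hyp) : X = 0 ↔ X + Y = Y := by
  constructor
  · intro h; rw [h]; exact hext (by simp) (by simp)
  · intro h
    have h1 := congrArg Hyp.re h
    have h2 := congrArg Hyp.im h
    simp only [add_re, add_im] at h1 h2
    exact hext (by simp only [zero_re]; linarith) (by simp only [zero_im]; linarith)

/-- pointwise algebraic identity -/
lemma algA (F G Fz Gz : Hyp) (a b : ℝ) (h : (Hyp.conj F * G).im ≠ 0) :
    -((Hyp.conj F * Gz - Fz * Hyp.conj G) / (F * Hyp.conj G - Hyp.conj F * G)) * (a • F + b • G)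
      + (F * Gz - Fz * G) / (F * Hyp.conj G - Hyp.conj F * G) * Hyp.conj (a • F + b • G)
      = a • Fz + b • Gz := by
  obtain ⟨f1, f2⟩ := F
  obtain ⟨g1, g2⟩ := G
  obtain ⟨e1, e2⟩ := Fz
  obtain ⟨k1, k2⟩ := Gz
  have ht : f1 * g2 - f2 * g1 ≠ 0 := by
    intro hc; apply h
    show f1 * g2 + -f2 * g1 = 0
    linarith
  have hd : ((⟨f1, f2⟩ : Hyp) * Hyp.conj ⟨g1, g2⟩ - Hyp.conj ⟨f1, f2⟩ * ⟨g1, g2⟩)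
      = ⟨0, 2 * (f2 * g1 - f1 * g2)⟩ := by
    apply hext <;> simp <;> ring
  rw [hd]
  have hden : (0 : ℝ) ^ 2 - (2 * (f2 * g1 - f1 * g2)) ^ 2 ≠ 0 := by
    intro hc; apply ht; nlinarith
  have h4 : -(f1 * f2 * g2 * g1 * 8) + f1 ^ 2 * g2 ^ 2 * 4 + f2 ^ 2 * g1 ^ 2 * 4 ≠ 0 := by
    intro hc; apply ht; nlinarith
  have hs : 2 * (f2 * g1 - f1 * g2) ≠ 0 := by
    intro hc; apply ht; linarith
  have ediv0 : (0 : ℝ) / (0 ^ 2 - (2 * (f2 * g1 - f1 * g2)) ^ 2) = 0 := zero_div _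
  have ediv1 : -(2 * (f2 * g1 - f1 * g2)) / (0 ^ 2 - (2 * (f2 * g1 - f1 * g2)) ^ 2)
      = 1 / (2 * (f2 * g1 - f1 * g2)) := by
    rw [div_eq_div_iff hden hs]; ring
  apply hext <;>
    simp only [div_def, mul_re, mul_im, add_re, add_im, sub_re, sub_im, neg_re, neg_im,
      smul_re, smul_im, conj_re, conj_im, inv_re, inv_im] <;>
    rw [ediv0, ediv1] <;>
    field_simp [hs, show f2 * g1 - f1 * g2 ≠ 0 by intro hc; apply ht; linarith] <;>
    ring

lemma px_congr {f g : ℝ × ℝ → ℝ} {p : ℝ × ℝ} (h : f =ᶠ[nhds p] g) : px f p = px g p := by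
  unfold px; rw [h.fderiv_eq]

lemma pt_congr {f g : ℝ × ℝ → ℝ} {p : ℝ × ℝ} (h : f =ᶠ[nhds p] g) : pt f p = pt g p := by
  unfold pt; rw [h.fderiv_eq]

lemma px_muladd {φ ψ u v : ℝ × ℝ → ℝ} {p : ℝ × ℝ}
    (hφ : DifferentiableAt ℝ φ p) (hu : DifferentiableAt ℝ u p)
    (hψ : DifferentiableAt ℝ ψ p) (hv : DifferentiableAt ℝ v p) :
    px (fun q => φ q * u q + ψ q * v q) p =
      px φ p * u p + φ p * px u p + (px ψ p * v p + ψ p * px v p) := by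
  unfold px
  rw [fderiv_fun_add (hφ.fun_mul hu) (hψ.fun_mul hv), fderiv_fun_mul hφ hu, fderiv_fun_mul hψ hv]
  simp only [ContinuousLinearMap.add_apply, ContinuousLinearMap.smul_apply, smul_eq_mul]
  ring

lemma pt_muladd {φ ψ u v : ℝ × ℝ → ℝ} {p : ℝ × ℝ}
    (hφ : DifferentiableAt ℝ φ p) (hu : DifferentiableAt ℝ u p)
    (hψ : DifferentiableAt ℝ ψ p) (hv : DifferentiableAt ℝ v p) :
    pt (fun q => φ q * u q + ψ q * v q) p =
      pt φ p * u p + φ p * pt u p + (pt ψ p * v p + ψ p * pt v p) := by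
  unfold pt
  rw [fderiv_fun_add (hφ.fun_mul hu) (hψ.fun_mul hv), fderiv_fun_mul hφ hu, fderiv_fun_mul hψ hv]
  simp only [ContinuousLinearMap.add_apply, ContinuousLinearMap.smul_apply, smul_eq_mul]
  ring

end HypAux

/-- for `w = φF + ψG` (C¹), `φ_z̄ F + ψ_z̄ G = 0` iff `w` satisfies the
hyperbolic Vekua equation `w_z̄ = a_{(F,G)} w + b_{(F,G)} conj w`. -/
theorem vekua_iff_phi_psi_equation (Ω : Set (ℝ × ℝ)) (hΩ : IsOpen Ω)
    (F G : ℝ × ℝ → Hyp) (φ ψ : ℝ × ℝ → ℝ)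
    (hFre : ContDiffOn ℝ 1 (reP F) Ω) (hFim : ContDiffOn ℝ 1 (imP F) Ω)
    (hGre : ContDiffOn ℝ 1 (reP G) Ω) (hGim : ContDiffOn ℝ 1 (imP G) Ω)
    (hφ : ContDiffOn ℝ 1 φ Ω) (hψ : ContDiffOn ℝ 1 ψ Ω)
    (hFG : ∀ p ∈ Ω, (Hyp.conj (F p) * G p).im ≠ 0)
    (w : ℝ × ℝ → Hyp) (hw : ∀ p ∈ Ω, w p = φ p • F p + ψ p • G p) :
    ∀ p ∈ Ω,
      (dzbarR φ p * F p + dzbarR ψ p * G p = 0 ↔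
        dzbar w p = charA F G p * w p + charB F G p * Hyp.conj (w p)) := by
  
  intro p hp
  have hmem : Ω ∈ nhds p := hΩ.mem_nhds hp
  have dφ : DifferentiableAt ℝ φ p := (hφ.contDiffAt hmem).differentiableAt one_ne_zero
  have dψ : DifferentiableAt ℝ ψ p := (hψ.contDiffAt hmem).differentiableAt one_ne_zero
  have dFre : DifferentiableAt ℝ (reP F) p := (hFre.contDiffAt hmem).differentiableAt one_ne_zero
  have dFim : DifferentiableAt ℝ (imP F) p := (hFim.contDiffAt hmem).differentiableAt one_ne_zero
  have dGre : DifferentiableAt ℝ (reP G) p := (hGre.contDiffAt hmem).differentiableAt one_ne_zero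
  have dGim : DifferentiableAt ℝ (imP G) p := (hGim.contDiffAt hmem).differentiableAt one_ne_zero
  have hre : reP w =ᶠ[nhds p] fun q => φ q * reP F q + ψ q * reP G q := by
    filter_upwards [hmem] with q hq
    simp [reP, hw q hq]
  have him : imP w =ᶠ[nhds p] fun q => φ q * imP F q + ψ q * imP G q := by
    filter_upwards [hmem] with q hq
    simp [imP, hw q hq]
  have hdecomp : dzbar w p = dzbarR φ p * F p + dzbarR ψ p * G p
      + (φ p • dzbar F p + ψ p • dzbar G p) := by
    apply HypAux.hext
    · show (px (reP w) p - pt (imP w) p) / 2 = _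
      rw [HypAux.px_congr hre, HypAux.pt_congr him,
        HypAux.px_muladd dφ dFre dψ dGre, HypAux.pt_muladd dφ dFim dψ dGim]
      simp only [HypAux.add_re, HypAux.mul_re, HypAux.smul_re]
      show _ = px φ p / 2 * (F p).re + -(pt φ p) / 2 * (F p).im
          + (px ψ p / 2 * (G p).re + -(pt ψ p) / 2 * (G p).im)
          + (φ p * ((px (reP F) p - pt (imP F) p) / 2)
            + ψ p * ((px (reP G) p - pt (imP G) p) / 2))
      show (px φ p * (F p).re + φ p * px (reP F) p + (px ψ p * (G p).re + ψ p * px (reP G) p)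
        - (pt φ p * (F p).im + φ p * pt (imP F) p + (pt ψ p * (G p).im + ψ p * pt (imP G) p))) / 2 = _
      ring
    · show (px (imP w) p - pt (reP w) p) / 2 = _
      rw [HypAux.px_congr him, HypAux.pt_congr hre,
        HypAux.px_muladd dφ dFim dψ dGim, HypAux.pt_muladd dφ dFre dψ dGre]
      show (px φ p * (F p).im + φ p * px (imP F) p + (px ψ p * (G p).im + ψ p * px (imP G) p)
        - (pt φ p * (F p).re + φ p * pt (reP F) p + (pt ψ p * (G p).re + ψ p * pt (reP G) p))) / 2
        = px φ p / 2 * (F p).im + -(pt φ p) / 2 * (F p).re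
          + (px ψ p / 2 * (G p).im + -(pt ψ p) / 2 * (G p).re)
          + (φ p * ((px (imP F) p - pt (reP F) p) / 2)
            + ψ p * ((px (imP G) p - pt (reP G) p) / 2))
      ring
  have halg : charA F G p * w p + charB F G p * Hyp.conj (w p)
      = φ p • dzbar F p + ψ p • dzbar G p := by
    rw [hw p hp]
    exact HypAux.algA (F p) (G p) (dzbar F p) (dzbar G p) (φ p) (ψ p) (hFG p hp)
  rw [halg, hdecomp]
  exact HypAux.cancel _ _
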